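/- For every positive integer r and every real constant c, lim_{SNR→∞} P[ Σ_{i=1}^{r} log₂(1 + SNR·H_i) ≤ r·log₂(SNR) + c ] = P[ Σ_{i=1}^{r} log₂(H_i) ≤ c ], and the limiting probability is strictly between 0 and 1 since the support of Σ_{i=1}^{r} log₂(H_i) is the whole real line. -/

import Mathlib

open MeasureTheory ProbabilityTheory Real Filter Topology

private lemma measurable_logb2 : Measurable (fun x : ℝ => Real.logb 2 x) :=
  Real.measurable_log.div_const _

private lemma expMeasure_null' {s : Set ℝ} (hs : MeasureTheory.volume s = 0) :
    expMeasure 1 s = 0 := by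
  have h : expMeasure 1 = MeasureTheory.volume.withDensity (gammaPDF 1 1) := rfl
  rw [h]; exact (withDensity_absolutelyContinuous _ _) hs

private lemma expMeasure_Iic_zero' : expMeasure 1 (Set.Iic 0) = 0 := by
  have h1 : expMeasure 1 (Set.Iio 0) = 0 := by
    have h : expMeasure 1 = MeasureTheory.volume.withDensity (gammaPDF 1 1) := rfl
    rw [h, withDensity_apply _ measurableSet_Iio]
    exact lintegral_gammaPDF_of_nonpos le_rfl
  have h2 : expMeasure 1 {(0:ℝ)} = 0 := expMeasure_null' (by simp)
  have h3 : Set.Iic (0:ℝ) = Set.Iio 0 ∪ {0} := by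
    ext x; simp [le_iff_lt_or_eq]
  rw [h3]
  exact le_antisymm ((measure_union_le _ _).trans (by simp [h1, h2])) zero_le

private lemma expMeasure_pos_Ioc' {a b : ℝ} (ha : 0 ≤ a) (hab : a < b) :
    0 < expMeasure 1 (Set.Ioc a b) := by
  have h : expMeasure 1 = MeasureTheory.volume.withDensity (exponentialPDF 1) := rfl
  rw [h, withDensity_apply _ measurableSet_Ioc]
  have hmeaspdf : Measurable (exponentialPDF 1) :=
    (measurable_exponentialPDFReal 1).ennreal_ofReal
  have hle : ∫⁻ _ in Set.Ioc a b, ENNReal.ofReal (Real.exp (-b)) ∂volume ≤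
      ∫⁻ x in Set.Ioc a b, exponentialPDF 1 x ∂volume := by
    refine setLIntegral_mono hmeaspdf fun x hx => ?_
    rw [exponentialPDF_of_nonneg (ha.trans hx.1.le)]
    refine ENNReal.ofReal_le_ofReal ?_
    rw [one_mul]
    exact Real.exp_le_exp.mpr (by simpa using hx.2)
  refine lt_of_lt_of_le ?_ hle
  rw [setLIntegral_const, Real.volume_Ioc]
  exact ENNReal.mul_pos (ENNReal.ofReal_pos.mpr (Real.exp_pos _)).ne'
    (ENNReal.ofReal_pos.mpr (by linarith)).ne'

private lemma logb_fiber' (a : ℝ) :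
    {x : ℝ | Real.logb 2 x = a} ⊆ {0, (2:ℝ) ^ a, -((2:ℝ) ^ a)} := by
  intro x hx
  rcases eq_or_ne x 0 with h0 | h0
  · exact Or.inl h0
  · have habs : (2:ℝ) ^ Real.logb 2 x = |x| :=
      Real.rpow_logb_eq_abs (by norm_num) (by norm_num) h0
    rw [hx] at habs
    rcases abs_cases x with ⟨h, _⟩ | ⟨h, _⟩
    · exact Or.inr (Or.inl (by rw [habs, h]))
    · refine Or.inr (Or.inr ?_)
      have hxx : x = -|x| := by rw [h]; ring
      rw [hxx, habs]
      rfl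

private lemma sum_logb_atomless' {Ω : Type*} [MeasurableSpace Ω] (μ : Measure Ω)
    [IsProbabilityMeasure μ] (H : ℕ → Ω → ℝ) (hmeas : ∀ i, Measurable (H i))
    (hindep : iIndepFun H μ)
    (hdist : ∀ i, Measure.map (H i) μ = expMeasure 1)
    (r : ℕ) (hr : 1 ≤ r) (c : ℝ) :
    μ {ω | ∑ i ∈ Finset.range r, Real.logb 2 (H i ω) = c} = 0 := by
  obtain ⟨n, rfl⟩ : ∃ n, r = n + 1 := ⟨r - 1, (Nat.succ_pred_eq_of_pos hr).symm⟩
  set X : ℕ → Ω → ℝ := fun i ω => Real.logb 2 (H i ω) with hX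
  have hXmeas : ∀ i, Measurable (X i) := fun i => measurable_logb2.comp (hmeas i)
  have hXindep : iIndepFun X μ :=
    hindep.comp (fun _ => Real.logb 2) (fun _ => measurable_logb2)
  have hSX : IndepFun (∑ j ∈ Finset.range n, X j) (X n) μ :=
    hXindep.indepFun_sum_range_succ hXmeas n
  set S : Ω → ℝ := fun ω => ∑ j ∈ Finset.range n, X j ω with hS
  have hSeq : (∑ j ∈ Finset.range n, X j) = S := by
    funext ω; simp [hS, Finset.sum_apply]
  rw [hSeq] at hSX
  have hSmeas : Measurable S := Finset.measurable_sum _ (fun i _ => hXmeas i)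
  haveI : IsProbabilityMeasure (μ.map S) := Measure.isProbabilityMeasure_map hSmeas.aemeasurable
  haveI : IsProbabilityMeasure (μ.map (X n)) :=
    Measure.isProbabilityMeasure_map (hXmeas n).aemeasurable
  have hpair : μ.map (fun ω => (S ω, X n ω)) = (μ.map S).prod (μ.map (X n)) :=
    (indepFun_iff_map_prod_eq_prod_map_map hSmeas.aemeasurable
      (hXmeas n).aemeasurable).mp hSX
  have hset : MeasurableSet {p : ℝ × ℝ | p.1 + p.2 = c} :=
    (measurable_fst.add measurable_snd) (measurableSet_singleton c)
  have hXsingleton : ∀ t : ℝ, (μ.map (X n)) {t} = 0 := by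
    intro t
    rw [Measure.map_apply (hXmeas n) (measurableSet_singleton t)]
    have hsub : X n ⁻¹' {t} ⊆ H n ⁻¹' {0, (2:ℝ) ^ t, -((2:ℝ) ^ t)} := by
      intro ω hω
      exact logb_fiber' t hω
    refine le_antisymm (le_trans (measure_mono hsub) ?_) zero_le
    have heq : μ (H n ⁻¹' {0, (2:ℝ) ^ t, -((2:ℝ) ^ t)}) =
        expMeasure 1 {0, (2:ℝ) ^ t, -((2:ℝ) ^ t)} := by
      rw [← hdist n, Measure.map_apply (hmeas n)]
      exact (Set.finite_singleton _).insert _ |>.insert _ |>.measurableSet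
    rw [heq]
    exact le_of_eq (expMeasure_null'
      ((Set.finite_singleton _).insert _ |>.insert _ |>.measure_zero _))
  calc μ {ω | ∑ i ∈ Finset.range (n+1), Real.logb 2 (H i ω) = c}
      = μ ((fun ω => (S ω, X n ω)) ⁻¹' {p : ℝ × ℝ | p.1 + p.2 = c}) := by
        congr 1; ext ω; simp [hS, hX, Finset.sum_range_succ]
    _ = (μ.map (fun ω => (S ω, X n ω))) {p : ℝ × ℝ | p.1 + p.2 = c} :=
        (Measure.map_apply (hSmeas.prodMk (hXmeas n)) hset).symm
    _ = ((μ.map S).prod (μ.map (X n))) {p : ℝ × ℝ | p.1 + p.2 = c} := by rw [hpair]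
    _ = ∫⁻ x, (μ.map (X n)) (Prod.mk x ⁻¹' {p : ℝ × ℝ | p.1 + p.2 = c}) ∂(μ.map S) :=
        Measure.prod_apply hset
    _ = 0 := by
        rw [lintegral_congr (g := fun _ => (0:ENNReal)) ?_, lintegral_zero]
        intro x
        have hpre : Prod.mk x ⁻¹' {p : ℝ × ℝ | p.1 + p.2 = c} = {c - x} := by
          ext y; simp [eq_sub_iff_add_eq']
        rw [hpre, hXsingleton]

/-- for every positive integer `r` and real `c`,
`P[Σ_{i=1}^r log₂(1+SNR·Hᵢ) ≤ r·log₂(SNR) + c] → P[Σ_{i=1}^r log₂(Hᵢ) ≤ c]` as `SNR → ∞`,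
and the limiting probability is strictly between `0` and `1`. -/
theorem outage_prob_tendsto_shifted_limit
    {Ω : Type*} [MeasurableSpace Ω] (μ : Measure Ω) [IsProbabilityMeasure μ]
    (H : ℕ → Ω → ℝ) (hmeas : ∀ i, Measurable (H i))
    (hindep : iIndepFun H μ)
    (hdist : ∀ i, Measure.map (H i) μ = expMeasure 1)
    (r : ℕ) (hr : 1 ≤ r) (c : ℝ) :
    Tendsto
      (fun snr : ℝ =>
        (μ {ω | ∑ i ∈ Finset.range r, Real.logb 2 (1 + snr * H i ω) ≤
            (r : ℝ) * Real.logb 2 snr + c}).toReal)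
      atTop
      (𝓝 ((μ {ω | ∑ i ∈ Finset.range r, Real.logb 2 (H i ω) ≤ c}).toReal)) ∧
    0 < (μ {ω | ∑ i ∈ Finset.range r, Real.logb 2 (H i ω) ≤ c}).toReal ∧
    (μ {ω | ∑ i ∈ Finset.range r, Real.logb 2 (H i ω) ≤ c}).toReal < 1 := by
  have hrne : r ≠ 0 := by omega
  have hrpos : (0:ℝ) < r := by exact_mod_cast Nat.pos_of_ne_zero hrne
  have hHset : ∀ i (s : Set ℝ), MeasurableSet s → μ (H i ⁻¹' s) = expMeasure 1 s := by
    intro i s hs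
    rw [← hdist i, Measure.map_apply (hmeas i) hs]
  set G : Set Ω := {ω | ∀ i ∈ Finset.range r, 0 < H i ω} with hG
  have hGc : μ Gᶜ = 0 := by
    have hsub : Gᶜ ⊆ ⋃ i ∈ Finset.range r, H i ⁻¹' Set.Iic 0 := by
      intro ω hω
      simp only [hG, Set.mem_compl_iff, Set.mem_setOf_eq, not_forall] at hω
      obtain ⟨i, hi, hneg⟩ := hω
      exact Set.mem_biUnion hi (by simpa using not_lt.mp hneg)
    refine measure_mono_null hsub ?_
    refine (measure_biUnion_null_iff (Finset.range r).countable_toSet).mpr fun i _ => ?_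
    rw [hHset i _ measurableSet_Iic]
    exact expMeasure_Iic_zero'
  set T : Set Ω := {ω | ∑ i ∈ Finset.range r, Real.logb 2 (H i ω) ≤ c} with hT
  have hprod : ∀ s : Set ℝ, MeasurableSet s →
      μ (⋂ i ∈ Finset.range r, H i ⁻¹' s) = ∏ i ∈ Finset.range r, μ (H i ⁻¹' s) :=
    fun s hs => hindep.measure_inter_preimage_eq_mul (Finset.range r)
      (sets := fun _ => s) (fun i _ => hs)
  have hpos : 0 < μ T := by
    set t : ℝ := (2:ℝ) ^ (c / r) with ht
    have htpos : 0 < t := Real.rpow_pos_of_pos (by norm_num) _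
    have hsub : (⋂ i ∈ Finset.range r, H i ⁻¹' Set.Ioc 0 t) ⊆ T := by
      intro ω hω
      simp only [Set.mem_iInter, Set.mem_preimage, Set.mem_Ioc] at hω
      have hsum : ∑ i ∈ Finset.range r, Real.logb 2 (H i ω) ≤
          ∑ _i ∈ Finset.range r, (c / r) := by
        refine Finset.sum_le_sum fun i hi => ?_
        exact (Real.logb_le_iff_le_rpow one_lt_two (hω i hi).1).mpr (hω i hi).2
      simp only [Finset.sum_const, Finset.card_range, nsmul_eq_mul] at hsum
      rw [hT]
      simp only [Set.mem_setOf_eq]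
      calc ∑ i ∈ Finset.range r, Real.logb 2 (H i ω) ≤ r * (c / r) := hsum
        _ = c := by field_simp
    refine lt_of_lt_of_le ?_ (measure_mono hsub)
    rw [hprod _ measurableSet_Ioc, pos_iff_ne_zero, Finset.prod_ne_zero_iff]
    intro i _
    rw [hHset i _ measurableSet_Ioc]
    exact (expMeasure_pos_Ioc' le_rfl htpos).ne'
  have hlt : μ T < 1 := by
    set u : ℝ := (2:ℝ) ^ (c / r + 1) with hu
    have hupos : 0 < u := Real.rpow_pos_of_pos (by norm_num) _
    set B : Set Ω := ⋂ i ∈ Finset.range r, H i ⁻¹' Set.Ioi u with hB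
    have hBpos : 0 < μ B := by
      rw [hB, hprod _ measurableSet_Ioi, pos_iff_ne_zero, Finset.prod_ne_zero_iff]
      intro i _
      rw [hHset i _ measurableSet_Ioi]
      exact (lt_of_lt_of_le (expMeasure_pos_Ioc' hupos.le (lt_add_one u))
        (measure_mono Set.Ioc_subset_Ioi_self)).ne'
    have hdisj : Disjoint T B := by
      rw [Set.disjoint_left]
      intro ω hωT hωB
      simp only [hB, Set.mem_iInter, Set.mem_preimage, Set.mem_Ioi] at hωB
      have hsum : ∑ _i ∈ Finset.range r, (c / r + 1) ≤
          ∑ i ∈ Finset.range r, Real.logb 2 (H i ω) := by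
        refine Finset.sum_le_sum fun i hi => ?_
        have hlog := Real.logb_lt_logb one_lt_two hupos (hωB i hi)
        have hlogu : Real.logb 2 u = c / r + 1 := by
          rw [hu]; exact Real.logb_rpow (by norm_num) (by norm_num)
        rw [hlogu] at hlog
        exact hlog.le
      simp only [Finset.sum_const, Finset.card_range, nsmul_eq_mul] at hsum
      have hc : c < r * (c / r + 1) := by
        rw [mul_add, mul_one]
        have hcc : r * (c / r) = c := by field_simp
        linarith
      have hcs : c < ∑ i ∈ Finset.range r, Real.logb 2 (H i ω) := lt_of_lt_of_le hc hsum
      exact absurd hωT (by simpa [hT] using not_le.mpr hcs)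
    have hBmeas : MeasurableSet B :=
      MeasurableSet.biInter (Finset.range r).countable_toSet
        (fun i _ => (hmeas i) measurableSet_Ioi)
    have hsum_le : μ T + μ B ≤ 1 := by
      rw [← measure_union hdisj hBmeas]
      exact (measure_mono (Set.subset_univ _)).trans_eq measure_univ
    calc μ T < μ T + μ B := ENNReal.lt_add_right (measure_ne_top μ T) hBpos.ne'
      _ ≤ 1 := hsum_le
  refine ⟨?_, ENNReal.toReal_pos hpos.ne' (measure_ne_top μ T),
    (ENNReal.toReal_lt_toReal (measure_ne_top μ T) ENNReal.one_ne_top).mpr (by simpa using hlt)⟩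
  set F : ℝ → Set Ω := fun s =>
    {ω | ∑ i ∈ Finset.range r, Real.logb 2 ((max 1 s)⁻¹ + H i ω) ≤ c} ∩ G with hF
  have hmaxpos : ∀ s : ℝ, 0 < max 1 s := fun s => lt_of_lt_of_le one_pos (le_max_left _ _)
  have hmono : Monotone F := by
    intro s t hst ω hω
    obtain ⟨hsum, hGω⟩ := hω
    refine ⟨?_, hGω⟩
    simp only [Set.mem_setOf_eq] at hsum ⊢
    refine le_trans (Finset.sum_le_sum fun i hi => ?_) hsum
    have hx : 0 < (max 1 t)⁻¹ + H i ω :=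
      add_pos (inv_pos.mpr (hmaxpos t)) (hGω i hi)
    refine Real.logb_le_logb_of_le one_lt_two hx (add_le_add_left ?_ _)
    exact inv_anti₀ (hmaxpos s) (max_le_max le_rfl hst)
  have hunion : (⋃ s : ℝ, F s) =
      {ω | ∑ i ∈ Finset.range r, Real.logb 2 (H i ω) < c} ∩ G := by
    ext ω
    simp only [Set.mem_iUnion, hF, Set.mem_inter_iff, Set.mem_setOf_eq]
    constructor
    · rintro ⟨s, hsum, hGω⟩
      refine ⟨lt_of_lt_of_le ?_ hsum, hGω⟩
      refine Finset.sum_lt_sum_of_nonempty (Finset.nonempty_range_iff.mpr hrne) fun i hi => ?_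
      exact Real.logb_lt_logb one_lt_two (hGω i hi)
        (lt_add_of_pos_left _ (inv_pos.mpr (hmaxpos s)))
    · rintro ⟨hltc, hGω⟩
      have hTend : Tendsto (fun s : ℝ => ∑ i ∈ Finset.range r,
          Real.logb 2 ((max 1 s)⁻¹ + H i ω)) atTop
          (𝓝 (∑ i ∈ Finset.range r, Real.logb 2 (H i ω))) := by
        refine tendsto_finset_sum _ fun i hi => ?_
        have h1 : Tendsto (fun s : ℝ => max 1 s) atTop atTop :=
          tendsto_atTop_mono (fun s => le_max_right 1 s) tendsto_id
        have h2 : Tendsto (fun s : ℝ => (max 1 s)⁻¹) atTop (𝓝 0) :=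
          tendsto_inv_atTop_zero.comp h1
        have h3 : Tendsto (fun s : ℝ => (max 1 s)⁻¹ + H i ω) atTop (𝓝 (H i ω)) := by
          simpa using h2.add_const (H i ω)
        exact ((Real.continuousAt_logb (ne_of_gt (hGω i hi))).tendsto).comp h3
      obtain ⟨s, hs⟩ := (hTend.eventually_lt_const hltc).exists
      exact ⟨s, hs.le, hGω⟩
  have htendsto : Tendsto (μ ∘ F) atTop (𝓝 (μ T)) := by
    have h1 := tendsto_measure_iUnion_atTop (μ := μ) hmono
    rw [hunion, measure_inter_conull hGc] at h1
    have h2 : μ {ω | ∑ i ∈ Finset.range r, Real.logb 2 (H i ω) < c} = μ T := by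
      refine le_antisymm (measure_mono fun ω (h : ∑ i ∈ Finset.range r, Real.logb 2 (H i ω) < c) => show ∑ i ∈ Finset.range r, Real.logb 2 (H i ω) ≤ c from le_of_lt h) ?_
      have hsplit : T ⊆ {ω | ∑ i ∈ Finset.range r, Real.logb 2 (H i ω) < c} ∪
          {ω | ∑ i ∈ Finset.range r, Real.logb 2 (H i ω) = c} := by
        intro ω hω
        have hω' : ∑ i ∈ Finset.range r, Real.logb 2 (H i ω) ≤ c := hω
        rcases hω'.lt_or_eq with h | h
        · exact Or.inl h
        · exact Or.inr h
      calc μ T ≤ _ := measure_mono hsplit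
        _ ≤ μ {ω | ∑ i ∈ Finset.range r, Real.logb 2 (H i ω) < c} +
            μ {ω | ∑ i ∈ Finset.range r, Real.logb 2 (H i ω) = c} := measure_union_le _ _
        _ = μ {ω | ∑ i ∈ Finset.range r, Real.logb 2 (H i ω) < c} := by
            rw [sum_logb_atomless' μ H hmeas hindep hdist r hr c, add_zero]
    rwa [h2] at h1
  have hEF : ∀ᶠ s in (atTop : Filter ℝ), (μ ∘ F) s =
      μ {ω | ∑ i ∈ Finset.range r, Real.logb 2 (1 + s * H i ω) ≤
          (r : ℝ) * Real.logb 2 s + c} := by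
    filter_upwards [eventually_ge_atTop (1:ℝ)] with s hs
    have hmax : max 1 s = s := max_eq_right hs
    have hspos : 0 < s := lt_of_lt_of_le one_pos hs
    have hEq : {ω | ∑ i ∈ Finset.range r, Real.logb 2 (1 + s * H i ω) ≤
        (r : ℝ) * Real.logb 2 s + c} ∩ G = F s := by
      simp only [hF, hmax]
      ext ω
      simp only [Set.mem_inter_iff, Set.mem_setOf_eq]
      refine and_congr_left fun hGω => ?_
      have hsum : ∀ i ∈ Finset.range r, Real.logb 2 (1 + s * H i ω) =
          Real.logb 2 s + Real.logb 2 (s⁻¹ + H i ω) := by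
        intro i hi
        have h1 : 1 + s * H i ω = s * (s⁻¹ + H i ω) := by field_simp
        rw [h1, Real.logb_mul hspos.ne' (add_pos (inv_pos.mpr hspos) (hGω i hi)).ne']
      rw [Finset.sum_congr rfl hsum, Finset.sum_add_distrib, Finset.sum_const,
        Finset.card_range, nsmul_eq_mul]
      exact add_le_add_iff_left _
    show μ (F s) = _
    rw [← hEq]
    exact measure_inter_conull hGc
  have hfinal : Tendsto (fun s : ℝ =>
      μ {ω | ∑ i ∈ Finset.range r, Real.logb 2 (1 + s * H i ω) ≤
          (r : ℝ) * Real.logb 2 s + c}) atTop (𝓝 (μ T)) :=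
    htendsto.congr' hEF
  exact (ENNReal.tendsto_toReal (measure_ne_top μ T)).comp hfinal
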